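/- Let A be a Γ-graded field, n a positive integer, and γ̄ ∈ Γ^n. Partition the shifts γ_1,…,γ_n into k classes according to their cosets modulo Γ_A, with class sizes r_1,…,r_k (so Σ r_l = n). Then the zero-component M_n(A)(γ̄)_0 is isomorphic as a ring to M_{r_1}(A_0) ⊕ … ⊕ M_{r_k}(A_0); in particular M_n(A)(γ̄)_0 is a unit-regular ring. -/

import Mathlib

/-- The zero-component `A₀` of a graded ring, as a subring. -/
def zeroSubring {Γ : Type*} [AddCommGroup Γ] {A : Type*} [Ring A]
    (𝒜 : Γ → AddSubgroup A) [SetLike.GradedMonoid 𝒜] : Subring A where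
  carrier := 𝒜 0
  zero_mem' := zero_mem _
  add_mem' := fun ha hb => add_mem ha hb
  neg_mem' := fun ha => neg_mem ha
  one_mem' := SetLike.one_mem_graded 𝒜
  mul_mem' := fun ha hb => by
    have h := SetLike.mul_mem_graded ha hb
    simpa using h

/-- The zero-component `Mₙ(A)(γ₁,…,γₙ)₀` of the graded matrix ring, as a subring of the
matrix ring: matrices `(a_{ij})` with `a_{ij} ∈ 𝒜 (γ_j - γ_i)`. -/
def matZeroSubring {Γ : Type*} [AddCommGroup Γ] {A : Type*} [Ring A]
    (𝒜 : Γ → AddSubgroup A) [SetLike.GradedMonoid 𝒜] {n : ℕ} (γs : Fin n → Γ) :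
    Subring (Matrix (Fin n) (Fin n) A) where
  carrier := {M | ∀ i j, M i j ∈ 𝒜 (γs j - γs i)}
  zero_mem' := by
    intro i j
    rw [Matrix.zero_apply]
    exact zero_mem _
  add_mem' := by
    intro M N hM hN i j
    rw [Matrix.add_apply]
    exact add_mem (hM i j) (hN i j)
  neg_mem' := by
    intro M hM i j
    rw [Matrix.neg_apply]
    exact neg_mem (hM i j)
  one_mem' := by
    intro i j
    by_cases h : i = j
    · subst h
      rw [Matrix.one_apply_eq, sub_self]
      exact SetLike.one_mem_graded 𝒜
    · rw [Matrix.one_apply_ne h]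
      exact zero_mem _
  mul_mem' := by
    intro M N hM hN i j
    rw [Matrix.mul_apply]
    refine sum_mem fun k _ => ?_
    have h := SetLike.mul_mem_graded (hM i k) (hN k j)
    have e : γs k - γs i + (γs j - γs k) = γs j - γs i := by abel
    rwa [e] at h



/-- Inverse of a homogeneous element is homogeneous of opposite degree. -/
lemma grf_inv_mem {Γ : Type*} [AddCommGroup Γ] [DecidableEq Γ] {A : Type*} [CommRing A]
    (𝒜 : Γ → AddSubgroup A) [GradedRing 𝒜] {γ : Γ} {a b : A}
    (ha : a ∈ 𝒜 γ) (hab : a * b = 1) : b ∈ 𝒜 (-γ) := by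
  classical
  have hzero : ∀ δ : Γ, δ ≠ -γ → (DirectSum.decompose 𝒜 b δ : A) = 0 := by
    intro δ hδ
    have h1 : (DirectSum.decompose 𝒜 (a * b) (γ + δ) : A)
        = a * (DirectSum.decompose 𝒜 b δ : A) :=
      DirectSum.coe_decompose_mul_add_of_left_mem 𝒜 ha
    have hne : (0 : Γ) ≠ γ + δ := fun h => hδ (eq_neg_of_add_eq_zero_right h.symm)
    have h2 : (DirectSum.decompose 𝒜 (a * b) (γ + δ) : A) = 0 := by
      rw [hab]
      exact DirectSum.decompose_of_mem_ne 𝒜 (SetLike.one_mem_graded 𝒜) hne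
    have h3 : a * (DirectSum.decompose 𝒜 b δ : A) = 0 := by rw [← h1, h2]
    calc (DirectSum.decompose 𝒜 b δ : A) = b * (a * (DirectSum.decompose 𝒜 b δ : A)) := by
          rw [← mul_assoc, mul_comm b a, hab, one_mul]
      _ = 0 := by rw [h3, mul_zero]
  have hb : b = (DirectSum.decompose 𝒜 b (-γ) : A) := by
    conv_lhs => rw [← DirectSum.sum_support_decompose 𝒜 b]
    rw [Finset.sum_eq_single (-γ)]
    · intro δ _ hδ; exact hzero δ hδ
    · intro h
      rw [DFinsupp.notMem_support_iff.mp h]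
      rfl
  rw [hb]
  exact SetLike.coe_mem _

/-- Transfer unit-regularity along a ring equivalence. -/
lemma unitreg_equiv {R S : Type*} [Ring R] [Ring S] (f : R ≃+* S)
    (h : ∀ a : R, ∃ u : Rˣ, a * ↑u * a = a) : ∀ b : S, ∃ u : Sˣ, b * ↑u * b = b := by
  intro b
  obtain ⟨w, hw⟩ := h (f.symm b)
  refine ⟨Units.map f.toRingHom.toMonoidHom w, ?_⟩
  have := congrArg f hw
  simpa [map_mul] using this

/-- Unit-regularity for products. -/
lemma unitreg_pi {ι : Type*} {R : ι → Type*} [∀ i, Ring (R i)]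
    (h : ∀ i, ∀ a : R i, ∃ u : (R i)ˣ, a * ↑u * a = a) :
    ∀ a : (∀ i, R i), ∃ u : (∀ i, R i)ˣ, a * ↑u * a = a := by
  intro a
  choose w hw using fun i => h i (a i)
  refine ⟨⟨fun i => ↑(w i), fun i => ↑(w i)⁻¹, ?_, ?_⟩, ?_⟩
  · funext i; simp
  · funext i; simp
  · funext i; exact hw i

/-- Endomorphisms of a finite-dimensional vector space are unit-regular. -/
lemma unitreg_end {K V : Type*} [Field K] [AddCommGroup V] [Module K V]
    [FiniteDimensional K V] : ∀ f : Module.End K V, ∃ u : (Module.End K V)ˣ, f * ↑u * f = f := by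
  intro f
  obtain ⟨C, hC⟩ := Submodule.exists_isCompl (LinearMap.ker f)
  obtain ⟨D, hD⟩ := Submodule.exists_isCompl (LinearMap.range f)
  -- C ≃ range f via f
  let e1 : C ≃ₗ[K] LinearMap.range f :=
    (Submodule.quotientEquivOfIsCompl (LinearMap.ker f) C hC).symm.trans
      f.quotKerEquivRange
  have he1 : ∀ x : C, (e1 x : V) = f x := by
    intro x
    show (f.quotKerEquivRange
      ((Submodule.quotientEquivOfIsCompl (LinearMap.ker f) C hC).symm x) : V) = f x
    rw [Submodule.quotientEquivOfIsCompl_symm_apply]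
    exact f.quotKerEquivRange_apply_mk x
  -- ker f ≃ D by dimension count
  have hdim : Module.finrank K (LinearMap.ker f) = Module.finrank K D := by
    have h1 := Submodule.finrank_add_eq_of_isCompl hD
    have h2 := LinearMap.finrank_range_add_finrank_ker f
    omega
  let e2 : (LinearMap.ker f) ≃ₗ[K] D := LinearEquiv.ofFinrankEq _ _ hdim
  let g : V ≃ₗ[K] V :=
    (Submodule.prodEquivOfIsCompl (LinearMap.range f) D hD).symm.trans
      (((e1.symm.prodCongr e2.symm : (LinearMap.range f × D) ≃ₗ[K] (C × LinearMap.ker f))).trans (Submodule.prodEquivOfIsCompl C (LinearMap.ker f) hC.symm))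
  refine ⟨⟨g.toLinearMap, g.symm.toLinearMap, ?_, ?_⟩, ?_⟩
  · ext v; exact g.apply_symm_apply v
  · ext v; exact g.symm_apply_apply v
  · ext v
    show f (g (f v)) = f v
    have hfv : f v ∈ LinearMap.range f := LinearMap.mem_range_self f v
    have : g (f v) = (e1.symm ⟨f v, hfv⟩ : V) := by
      show (Submodule.prodEquivOfIsCompl C (LinearMap.ker f) hC.symm)
        ((e1.symm.prodCongr e2.symm) ((Submodule.prodEquivOfIsCompl (LinearMap.range f) D hD).symm (f v)))
        = _
      have h0 : ((LinearMap.range f).prodEquivOfIsCompl D hD).symm (f v)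
          = ((⟨f v, hfv⟩ : LinearMap.range f), (0 : D)) :=
        Submodule.prodEquivOfIsCompl_symm_apply_left (LinearMap.range f) D hD (⟨f v, hfv⟩ : LinearMap.range f)
      rw [h0]
      simp [Equiv.prodCongr_apply, Prod.map]
    rw [this, ← he1 (e1.symm ⟨f v, hfv⟩), e1.apply_symm_apply]

/-- Matrices over a field are unit-regular. -/
lemma unitreg_matrix {K : Type*} [Field K] (m : ℕ) :
    ∀ a : Matrix (Fin m) (Fin m) K,
      ∃ u : (Matrix (Fin m) (Fin m) K)ˣ, a * (u : Matrix (Fin m) (Fin m) K) * a = a :=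
  unitreg_equiv ((Matrix.toLinAlgEquiv' (R := K) (n := Fin m)).toRingEquiv).symm unitreg_end

set_option maxHeartbeats 1000000

/-- Let `A` be a `Γ`-graded field with support `Λ = Γ_A` and `γ̄ ∈ Γⁿ`.
Partition the shifts `γ₁,…,γₙ` into `k` classes according to their cosets modulo `Γ_A`
(encoded by `c : Fin n → Fin k`), with class sizes `r₁,…,r_k`.  Then
`Mₙ(A)(γ̄)₀ ≅ M_{r₁}(A₀) ⊕ … ⊕ M_{r_k}(A₀)` as rings; in particular `Mₙ(A)(γ̄)₀` is a
unit-regular ring. -/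
theorem stmt_17 {Γ : Type*} [AddCommGroup Γ] [DecidableEq Γ]
    {A : Type*} [CommRing A] [Nontrivial A]
    (𝒜 : Γ → AddSubgroup A) [GradedRing 𝒜]
    (hdiv : ∀ a : A, a ≠ 0 → (∃ γ, a ∈ 𝒜 γ) → IsUnit a)
    (Λ : AddSubgroup Γ) (hΛ : ∀ γ : Γ, γ ∈ Λ ↔ 𝒜 γ ≠ ⊥)
    {n k : ℕ} (γs : Fin n → Γ) (r : Fin k → ℕ) (c : Fin n → Fin k)
    (hc : ∀ i j : Fin n, c i = c j ↔ γs i - γs j ∈ Λ)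
    (hcs : Function.Surjective c)
    (hr : ∀ l : Fin k, r l = Fintype.card {i : Fin n // c i = l}) :
    Nonempty ((matZeroSubring 𝒜 γs) ≃+*
      ((l : Fin k) → Matrix (Fin (r l)) (Fin (r l)) (zeroSubring 𝒜))) ∧
    ∀ a : matZeroSubring 𝒜 γs, ∃ u : (matZeroSubring 𝒜 γs)ˣ, a * ↑u * a = a := by
  classical
  -- `A₀` is a field
  have hfield : IsField (zeroSubring 𝒜) := by
    refine ⟨⟨0, 1, fun h => zero_ne_one (α := A) (congrArg Subtype.val h)⟩, mul_comm, ?_⟩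
    intro a ha
    have hA : (a : A) ≠ 0 := fun h => ha (Subtype.ext h)
    have ha0 : (a : A) ∈ 𝒜 (0 : Γ) := a.2
    obtain ⟨w, hw⟩ := hdiv a hA ⟨0, ha0⟩
    have hmul : (a : A) * ↑w⁻¹ = 1 := by rw [← hw]; exact w.mul_inv
    have hinv : (↑w⁻¹ : A) ∈ 𝒜 (-(0 : Γ)) := grf_inv_mem 𝒜 ha0 hmul
    refine ⟨⟨(↑w⁻¹ : A), by rw [neg_zero] at hinv; exact hinv⟩, Subtype.ext ?_⟩
    exact hmul
  -- entries across distinct classes vanish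
  have hbot : ∀ {i j : Fin n}, c i ≠ c j → ∀ {x : A}, x ∈ 𝒜 (γs j - γs i) → x = 0 := by
    intro i j hij x hx
    have hnl : γs j - γs i ∉ Λ := fun h => hij ((hc j i).mpr h).symm
    have hb : 𝒜 (γs j - γs i) = ⊥ := by
      by_contra h'; exact hnl ((hΛ _).mpr h')
    rw [hb] at hx
    exact hx
  -- a section of `c`
  let s : Fin k → Fin n := Function.surjInv hcs
  have hs : ∀ l, c (s l) = l := fun l => Function.surjInv_eq hcs l
  -- homogeneous units
  have hex : ∀ i : Fin n, ∃ u v : A, u ∈ 𝒜 (γs i - γs (s (c i))) ∧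
      v ∈ 𝒜 (-(γs i - γs (s (c i)))) ∧ u * v = 1 := by
    intro i
    have hmemΛ : γs i - γs (s (c i)) ∈ Λ := (hc i (s (c i))).mp (hs (c i)).symm
    have hne : 𝒜 (γs i - γs (s (c i))) ≠ ⊥ := (hΛ _).mp hmemΛ
    obtain ⟨x, hx, hx0⟩ : ∃ x, x ∈ 𝒜 (γs i - γs (s (c i))) ∧ x ≠ 0 := by
      by_contra h
      push_neg at h
      refine hne ?_
      rw [AddSubgroup.eq_bot_iff_forall]
      exact fun y hy => by by_contra h0; exact h0 (h y hy) |>.elim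
    obtain ⟨w, hw⟩ := hdiv x hx0 ⟨_, hx⟩
    have hmul : x * ↑w⁻¹ = 1 := by rw [← hw]; exact w.mul_inv
    exact ⟨x, ↑w⁻¹, hx, grf_inv_mem 𝒜 hx hmul, hmul⟩
  choose u v hu hv huv using hex
  have hvu : ∀ i, v i * u i = 1 := fun i => by rw [mul_comm]; exact huv i
  -- class equivalences
  let e : ∀ l : Fin k, Fin (r l) ≃ {i : Fin n // c i = l} :=
    fun l => (Fintype.equivFinOfCardEq (hr l).symm).symm
  let ι : ∀ l, Fin (r l) → Fin n := fun l p => ((e l) p : Fin n)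
  have hι : ∀ l p, c (ι l p) = l := fun l p => ((e l) p).2
  have hmem : ∀ (M : matZeroSubring 𝒜 γs) (i j : Fin n),
      (M : Matrix (Fin n) (Fin n) A) i j ∈ 𝒜 (γs j - γs i) := fun M i j => M.2 i j
  have hdeg : ∀ {i j : Fin n}, c i = c j → ∀ {x : A}, x ∈ 𝒜 (γs j - γs i) →
      u i * x * v j ∈ 𝒜 (0 : Γ) := by
    intro i j hij x hx
    have h := SetLike.mul_mem_graded (SetLike.mul_mem_graded (hu i) hx) (hv j)
    have he : γs i - γs (s (c i)) + (γs j - γs i) + -(γs j - γs (s (c j))) = 0 := by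
      rw [hij]; abel
    rwa [he] at h
  have hcancel : ∀ (i j : Fin n) (a b : A), u i * a * v j = u i * b * v j → a = b := by
    intro i j a b h
    calc a = (v i * u i) * a * (v j * u j) := by rw [hvu, hvu]; ring
      _ = v i * (u i * a * v j) * u j := by ring
      _ = v i * (u i * b * v j) * u j := by rw [h]
      _ = (v i * u i) * b * (v j * u j) := by ring
      _ = b := by rw [hvu, hvu]; ring
  -- the forward map
  let Ffun : matZeroSubring 𝒜 γs → (∀ l, Matrix (Fin (r l)) (Fin (r l)) (zeroSubring 𝒜)) :=
    fun M l p q => ⟨u (ι l p) * (M : Matrix (Fin n) (Fin n) A) (ι l p) (ι l q) * v (ι l q),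
      by exact hdeg (by rw [hι, hι]) (hmem M _ _)⟩
  have Fcoe : ∀ M l p q, ((Ffun M l p q : A)) =
      u (ι l p) * (M : Matrix (Fin n) (Fin n) A) (ι l p) (ι l q) * v (ι l q) :=
    fun _ _ _ _ => rfl
  have hι_inj : ∀ l (p q : Fin (r l)), ι l p = ι l q → p = q := by
    intro l p q h
    have := Subtype.ext h (a1 := (e l) p) (a2 := (e l) q)
    exact (e l).injective this
  let F : matZeroSubring 𝒜 γs →+*
      (∀ l, Matrix (Fin (r l)) (Fin (r l)) (zeroSubring 𝒜)) := {
    toFun := Ffun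
    map_one' := by
      funext l
      apply Matrix.ext
      intro p q
      apply Subtype.ext
      rw [Fcoe]
      have hR : (((1 : ∀ l, Matrix (Fin (r l)) (Fin (r l)) (zeroSubring 𝒜)) l p q :
          zeroSubring 𝒜) : A)
          = (((1 : Matrix (Fin (r l)) (Fin (r l)) (zeroSubring 𝒜)) p q : zeroSubring 𝒜) : A) :=
        rfl
      rw [hR]
      have hL : ((1 : matZeroSubring 𝒜 γs) : Matrix (Fin n) (Fin n) A) = 1 := rfl
      rw [hL]
      by_cases hpq : p = q
      · subst hpq
        rw [Matrix.one_apply_eq, mul_one, huv]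
        rw [Matrix.one_apply_eq]
        rfl
      · have hne : ι l p ≠ ι l q := fun h => hpq (hι_inj l p q h)
        rw [Matrix.one_apply_ne hne, Matrix.one_apply_ne hpq, mul_zero, zero_mul]
        rfl
    map_mul' := by
      intro M N
      funext l
      apply Matrix.ext
      intro p q
      apply Subtype.ext
      rw [Fcoe]
      have hrhs : (((Ffun M * Ffun N) l p q : zeroSubring 𝒜) : A)
          = ∑ q' : Fin (r l), (Ffun M l p q' : A) * (Ffun N l q' q : A) := by
        show (((Ffun M l * Ffun N l) p q : zeroSubring 𝒜) : A) = _
        rw [Matrix.mul_apply]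
        push_cast
        rfl
      rw [hrhs]
      have hML : ((M * N : matZeroSubring 𝒜 γs) : Matrix (Fin n) (Fin n) A) (ι l p) (ι l q)
          = ∑ m : Fin n, (M : Matrix (Fin n) (Fin n) A) (ι l p) m
            * (N : Matrix (Fin n) (Fin n) A) m (ι l q) := by
        rw [show ((M * N : matZeroSubring 𝒜 γs) : Matrix (Fin n) (Fin n) A)
          = (M : Matrix (Fin n) (Fin n) A) * (N : Matrix (Fin n) (Fin n) A) from rfl,
          Matrix.mul_apply]
      rw [hML, Finset.mul_sum, Finset.sum_mul]
      have hstep1 : ∑ m : Fin n, u (ι l p) * ((M : Matrix (Fin n) (Fin n) A) (ι l p) m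
            * (N : Matrix (Fin n) (Fin n) A) m (ι l q)) * v (ι l q)
          = ∑ m ∈ Finset.univ.filter (fun m => c m = l),
            u (ι l p) * ((M : Matrix (Fin n) (Fin n) A) (ι l p) m
            * (N : Matrix (Fin n) (Fin n) A) m (ι l q)) * v (ι l q) := by
        symm
        apply Finset.sum_filter_of_ne
        intro m _ hne0
        by_contra hml
        have hne : c (ι l p) ≠ c m := by rw [hι]; exact fun h => hml h.symm
        rw [hbot hne (hmem M _ _), zero_mul, mul_zero, zero_mul] at hne0
        exact hne0 rfl
      rw [hstep1]
      have hstep2 : ∑ m ∈ Finset.univ.filter (fun m => c m = l),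
            u (ι l p) * ((M : Matrix (Fin n) (Fin n) A) (ι l p) m
            * (N : Matrix (Fin n) (Fin n) A) m (ι l q)) * v (ι l q)
          = ∑ m' : {m // c m = l}, u (ι l p) * ((M : Matrix (Fin n) (Fin n) A) (ι l p) ↑m'
            * (N : Matrix (Fin n) (Fin n) A) ↑m' (ι l q)) * v (ι l q) :=
        Finset.sum_subtype _ (fun x => by simp) _
      have hstep3 : ∑ m' : {m // c m = l},
            u (ι l p) * ((M : Matrix (Fin n) (Fin n) A) (ι l p) ↑m'
            * (N : Matrix (Fin n) (Fin n) A) ↑m' (ι l q)) * v (ι l q)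
          = ∑ q' : Fin (r l), u (ι l p) * ((M : Matrix (Fin n) (Fin n) A) (ι l p) (ι l q')
            * (N : Matrix (Fin n) (Fin n) A) (ι l q') (ι l q)) * v (ι l q) :=
        (Equiv.sum_comp (e l) _).symm
      rw [hstep2, hstep3]
      apply Finset.sum_congr rfl
      intro q' _
      rw [Fcoe, Fcoe]
      have h1 := hvu (ι l q')
      show u (ι l p) * ((M : Matrix (Fin n) (Fin n) A) (ι l p) (ι l q')
          * (N : Matrix (Fin n) (Fin n) A) (ι l q') (ι l q)) * v (ι l q) = _
      calc u (ι l p) * ((M : Matrix (Fin n) (Fin n) A) (ι l p) (ι l q')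
            * (N : Matrix (Fin n) (Fin n) A) (ι l q') (ι l q)) * v (ι l q)
          = (v (ι l q') * u (ι l q')) * (u (ι l p)
            * ((M : Matrix (Fin n) (Fin n) A) (ι l p) (ι l q')
            * (N : Matrix (Fin n) (Fin n) A) (ι l q') (ι l q)) * v (ι l q)) := by
            rw [h1, one_mul]
        _ = u (ι l p) * (M : Matrix (Fin n) (Fin n) A) (ι l p) (ι l q') * v (ι l q')
            * (u (ι l q') * (N : Matrix (Fin n) (Fin n) A) (ι l q') (ι l q) * v (ι l q)) := by
            ring
    map_zero' := by
      funext l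
      apply Matrix.ext
      intro p q
      apply Subtype.ext
      rw [Fcoe]
      show u (ι l p) * ((0 : Matrix (Fin n) (Fin n) A)) (ι l p) (ι l q) * v (ι l q)
        = ((0 : Matrix (Fin (r l)) (Fin (r l)) (zeroSubring 𝒜)) p q : A)
      simp
    map_add' := by
      intro M N
      funext l
      apply Matrix.ext
      intro p q
      apply Subtype.ext
      rw [Fcoe]
      have hR : (((Ffun M + Ffun N) l p q : zeroSubring 𝒜) : A)
          = (Ffun M l p q : A) + (Ffun N l p q : A) := rfl
      have hL : ((M + N : matZeroSubring 𝒜 γs) : Matrix (Fin n) (Fin n) A)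
          = (M : Matrix (Fin n) (Fin n) A) + (N : Matrix (Fin n) (Fin n) A) := rfl
      rw [hL, hR, Fcoe, Fcoe, Matrix.add_apply]
      ring }
  -- bijectivity
  have hinj : Function.Injective F := by
    intro M N h
    apply Subtype.ext
    apply Matrix.ext
    intro i j
    by_cases hij : c i = c j
    · have hjl : c j = c j := rfl
      set l := c j with hl
      have hi : c i = l := hij
      set p := (e l).symm ⟨i, hi⟩ with hp
      set q := (e l).symm ⟨j, hjl⟩ with hq
      have hip : ι l p = i := by
        show (((e l) ((e l).symm ⟨i, hi⟩)) : Fin n) = i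
        rw [Equiv.apply_symm_apply]
      have hjq : ι l q = j := by
        show (((e l) ((e l).symm ⟨j, hjl⟩)) : Fin n) = j
        rw [Equiv.apply_symm_apply]
      have h2 : (Ffun M l p q : A) = (Ffun N l p q : A) :=
        congrArg (fun X => ((X l p q : zeroSubring 𝒜) : A)) h
      rw [Fcoe, Fcoe, hip, hjq] at h2
      exact hcancel i j _ _ h2
    · rw [hbot hij (hmem M i j), hbot hij (hmem N i j)]
  have hsurj : Function.Surjective F := by
    intro N
    have hNc : ∀ (l l' : Fin k) (_ : l = l') (x y : {m // c m = l}) (x' y' : {m // c m = l'}),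
        (x : Fin n) = x' → (y : Fin n) = y' →
        N l ((e l).symm x) ((e l).symm y) = N l' ((e l').symm x') ((e l').symm y') := by
      rintro l _ rfl x y x' y' hx hy
      rw [Subtype.ext hx, Subtype.ext hy]
    let Mmat : Matrix (Fin n) (Fin n) A := fun i j =>
      if h : c i = c j then
        v i * ↑(N (c i) ((e (c i)).symm ⟨i, rfl⟩) ((e (c i)).symm ⟨j, h.symm⟩)) * u j
      else 0
    have hMmem : Mmat ∈ matZeroSubring 𝒜 γs := by
      intro i j
      show (if h : c i = c j then
        v i * ↑(N (c i) ((e (c i)).symm ⟨i, rfl⟩) ((e (c i)).symm ⟨j, h.symm⟩)) * u j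
        else 0) ∈ 𝒜 (γs j - γs i)
      by_cases h : c i = c j
      · rw [dif_pos h]
        have hx : (↑(N (c i) ((e (c i)).symm ⟨i, rfl⟩) ((e (c i)).symm ⟨j, h.symm⟩)) : A)
            ∈ 𝒜 (0 : Γ) := (N (c i) _ _).2
        have hmm := SetLike.mul_mem_graded (SetLike.mul_mem_graded (hv i) hx) (hu j)
        have he : -(γs i - γs (s (c i))) + 0 + (γs j - γs (s (c j))) = γs j - γs i := by
          rw [h]; abel
        rwa [he] at hmm
      · rw [dif_neg h]
        exact zero_mem _
    refine ⟨⟨Mmat, hMmem⟩, ?_⟩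
    funext l
    apply Matrix.ext
    intro p q
    apply Subtype.ext
    show u (ι l p) * (⟨Mmat, hMmem⟩ : matZeroSubring 𝒜 γs).val (ι l p) (ι l q) * v (ι l q)
      = ((N l p q : zeroSubring 𝒜) : A)
    have hij : c (ι l p) = c (ι l q) := by rw [hι, hι]
    have hMentry : (⟨Mmat, hMmem⟩ : matZeroSubring 𝒜 γs).val (ι l p) (ι l q)
        = v (ι l p) * ↑(N (c (ι l p)) ((e (c (ι l p))).symm ⟨ι l p, rfl⟩)
          ((e (c (ι l p))).symm ⟨ι l q, hij.symm⟩)) * u (ι l q) := by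
      show Mmat (ι l p) (ι l q) = _
      rw [show Mmat (ι l p) (ι l q) = if h : c (ι l p) = c (ι l q) then
        v (ι l p) * ↑(N (c (ι l p)) ((e (c (ι l p))).symm ⟨ι l p, rfl⟩)
          ((e (c (ι l p))).symm ⟨ι l q, h.symm⟩)) * u (ι l q) else 0 from rfl, dif_pos hij]
    rw [hMentry]
    set X : A := ↑(N (c (ι l p)) ((e (c (ι l p))).symm ⟨ι l p, rfl⟩)
      ((e (c (ι l p))).symm ⟨ι l q, hij.symm⟩)) with hX
    have hcalc : u (ι l p) * (v (ι l p) * X * u (ι l q)) * v (ι l q) = X := by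
      calc u (ι l p) * (v (ι l p) * X * u (ι l q)) * v (ι l q)
          = (u (ι l p) * v (ι l p)) * X * (u (ι l q) * v (ι l q)) := by ring
        _ = X := by rw [huv, huv, one_mul, mul_one]
    rw [hcalc, hX]
    have hp' : (e l).symm ⟨ι l p, hι l p⟩ = p := by
      rw [show (⟨ι l p, hι l p⟩ : {m // c m = l}) = (e l) p from Subtype.ext rfl,
        Equiv.symm_apply_apply]
    have hq' : (e l).symm ⟨ι l q, hι l q⟩ = q := by
      rw [show (⟨ι l q, hι l q⟩ : {m // c m = l}) = (e l) q from Subtype.ext rfl,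
        Equiv.symm_apply_apply]
    have hfin := hNc (c (ι l p)) l (hι l p) ⟨ι l p, rfl⟩ ⟨ι l q, hij.symm⟩
      ⟨ι l p, hι l p⟩ ⟨ι l q, hι l q⟩ rfl rfl
    rw [hp', hq'] at hfin
    exact congrArg Subtype.val hfin
  -- conclusion
  have hbij : Function.Bijective F := ⟨hinj, hsurj⟩
  let E : (matZeroSubring 𝒜 γs) ≃+*
      ((l : Fin k) → Matrix (Fin (r l)) (Fin (r l)) (zeroSubring 𝒜)) :=
    RingEquiv.ofBijective F hbij
  refine ⟨⟨E⟩, ?_⟩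
  letI : Field (zeroSubring 𝒜) := hfield.toField
  exact unitreg_equiv E.symm (unitreg_pi (fun l => unitreg_matrix (r l)))
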